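/- Let m ≤ K be naturals with K ≥ 1, and 0 < p ≤ 1 real. Then the limit as K' → ∞ (K' ≥ K) of (C(K', ⌊pK'⌋+1) - C(K'-m, ⌊pK'⌋+1)) / C(K', ⌊pK'⌋) equals ((1-p)/p)·(1 - (1-p)^m). More precisely: for fixed m ≥ 1 and a sequence t_{K'} with t_{K'}/K' → p, the sequence (C(K', t_{K'}+1) - C(K'-m, t_{K'}+1)) / C(K', t_{K'}) converges to ((1-p)/p)(1-(1-p)^m). -/

import Mathlib

open Filter Finset

/-- subset symmetry for binomial coefficients -/
lemma aux_choose_swap (n k m : ℕ) (h : k + m ≤ n) :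
    n.choose k * (n - k).choose m = n.choose m * (n - m).choose k := by
  have h1 := Nat.choose_mul (n := n) (Nat.le_add_right k m)
  have h2 := Nat.choose_mul (n := n) (Nat.le_add_left m k)
  rw [Nat.add_sub_cancel_left] at h1
  rw [Nat.add_sub_cancel] at h2
  have hsymm : (k + m).choose k = (k + m).choose m := by
    rw [← Nat.choose_symm (Nat.le_add_left m k), Nat.add_sub_cancel]
  rw [hsymm] at h1
  rw [← h1, h2]

lemma aux_cast_sub_le_abs (a b : ℕ) : ((a - b : ℕ) : ℝ) ≤ |(a : ℝ) - b| := by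
  rcases le_total b a with h | h
  · rw [Nat.cast_sub h]; exact le_abs_self _
  · rw [Nat.sub_eq_zero_of_le h, Nat.cast_zero]; positivity

/-- the key pointwise algebraic identity, valid when `k + 1 + m ≤ n`. -/
lemma aux_pointwise (n k m : ℕ) (h : k + 1 + m ≤ n) :
    ((n.choose (k + 1) : ℝ) - ((n - m).choose (k + 1) : ℝ)) / (n.choose k : ℝ)
      = (((n : ℝ) - k) / ((k : ℝ) + 1)) *
        (1 - ∏ i ∈ range m, (((n : ℝ) - k - 1 - i) / ((n : ℝ) - i))) := by
  have hk1n : k + 1 ≤ n := by omega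
  have hkn : k ≤ n := by omega
  have hC0 : (0 : ℝ) < (n.choose k : ℝ) := by
    exact_mod_cast Nat.choose_pos hkn
  have hC1 : (0 : ℝ) < (n.choose (k + 1) : ℝ) := by
    exact_mod_cast Nat.choose_pos hk1n
  -- ratio C(n,k+1)/C(n,k) = (n-k)/(k+1)
  have e1 : (n.choose (k + 1) : ℝ) / (n.choose k : ℝ) = ((n : ℝ) - k) / ((k : ℝ) + 1) := by
    have := Nat.choose_succ_right_eq n k
    have hcast : (n.choose (k + 1) : ℝ) * ((k : ℝ) + 1) = (n.choose k : ℝ) * ((n : ℝ) - k) := by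
      have := congrArg (fun x : ℕ => (x : ℝ)) this
      push_cast [Nat.cast_sub hkn] at this
      linarith [this]
    rw [div_eq_div_iff hC0.ne' (by positivity)]
    linarith [hcast]
  -- ratio C(n-m,k+1)/C(n,k+1) = prod
  have e2 : (((n - m).choose (k + 1) : ℝ)) / (n.choose (k + 1) : ℝ)
      = ∏ i ∈ range m, (((n : ℝ) - k - 1 - i) / ((n : ℝ) - i)) := by
    have hswap := aux_choose_swap n (k + 1) m h
    -- C(n,k+1) * C(n-(k+1), m) = C(n,m) * C(n-m, k+1)
    have hdf1 : ((n - (k + 1)).choose m : ℝ) * (m.factorial : ℝ)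
        = ((n - (k + 1)).descFactorial m : ℝ) := by
      rw [Nat.descFactorial_eq_factorial_mul_choose]; push_cast; ring
    have hdf2 : (n.choose m : ℝ) * (m.factorial : ℝ) = (n.descFactorial m : ℝ) := by
      rw [Nat.descFactorial_eq_factorial_mul_choose]; push_cast; ring
    have hdpos : (0 : ℝ) < (n.descFactorial m : ℝ) := by
      have : n.descFactorial m ≠ 0 := by
        rw [Ne, Nat.descFactorial_eq_zero_iff_lt]; omega
      positivity
    have hprod1 : ((n - (k + 1)).descFactorial m : ℝ)
        = ∏ i ∈ range m, ((n : ℝ) - k - 1 - i) := by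
      rw [Nat.descFactorial_eq_prod_range]
      push_cast
      refine Finset.prod_congr rfl fun i hi => ?_
      rw [Finset.mem_range] at hi
      rw [Nat.cast_sub (by omega), Nat.cast_sub (by omega)]
      push_cast; ring
    have hprod2 : (n.descFactorial m : ℝ) = ∏ i ∈ range m, ((n : ℝ) - i) := by
      rw [Nat.descFactorial_eq_prod_range]
      push_cast
      refine Finset.prod_congr rfl fun i hi => ?_
      rw [Finset.mem_range] at hi
      rw [Nat.cast_sub (by omega)]
    have hswapR : (n.choose (k + 1) : ℝ) * ((n - (k + 1)).descFactorial m : ℝ)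
        = (n.descFactorial m : ℝ) * ((n - m).choose (k + 1) : ℝ) := by
      rw [← hdf1, ← hdf2]
      have := congrArg (fun x : ℕ => (x : ℝ)) hswap
      push_cast at this
      nlinarith [this]
    rw [Finset.prod_div_distrib, ← hprod1, ← hprod2]
    rw [div_eq_div_iff hC1.ne' hdpos.ne']
    linarith [hswapR]
  rw [sub_div]
  have e3 : (((n - m).choose (k + 1) : ℝ)) / (n.choose k : ℝ)
      = ((((n - m).choose (k + 1) : ℝ)) / (n.choose (k + 1) : ℝ))
        * ((n.choose (k + 1) : ℝ) / (n.choose k : ℝ)) := by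
    field_simp
  rw [e3, e1, e2]
  ring

theorem stmt_13 (m : ℕ) (hm : 1 ≤ m) (p : ℝ) (hp0 : 0 < p) (hp1 : p ≤ 1)
    (t : ℕ → ℕ)
    (ht : Filter.Tendsto (fun K' : ℕ => (t K' : ℝ) / (K' : ℝ)) Filter.atTop (nhds p)) :
    Filter.Tendsto
      (fun K' : ℕ =>
        ((K'.choose (t K' + 1) : ℝ) - ((K' - m).choose (t K' + 1) : ℝ)) / (K'.choose (t K') : ℝ))
      Filter.atTop (nhds (((1 - p) / p) * (1 - (1 - p) ^ m))) := by
  have hK : Tendsto (fun K' : ℕ => (K' : ℝ)) atTop atTop := tendsto_natCast_atTop_atTop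
  have hinv : Tendsto (fun K' : ℕ => ((K' : ℝ))⁻¹) atTop (nhds 0) :=
    tendsto_inv_atTop_zero.comp hK
  have hne : ∀ᶠ K' : ℕ in atTop, (K' : ℝ) ≠ 0 := by
    filter_upwards [eventually_ge_atTop 1] with K' hK'
    positivity
  have htp1 : Tendsto (fun K' : ℕ => (t K' : ℝ) / K' + ((K' : ℝ))⁻¹) atTop (nhds p) := by
    simpa using ht.add hinv
  rcases eq_or_lt_of_le hp1 with hp | hp
  · -- p = 1 case: squeeze to 0
    subst hp
    have htarget : ((1 - (1:ℝ)) / 1) * (1 - (1 - 1) ^ m) = 0 := by norm_num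
    rw [htarget]
    -- the sequence is nonneg and bounded above by |1 - t/K'| * (K'/(t+1)) eventually
    have hub : Tendsto (fun K' : ℕ => |1 - (t K' : ℝ) / K'| * ((K' : ℝ) / ((t K' : ℝ) + 1)))
        atTop (nhds 0) := by
      have h1 : Tendsto (fun K' : ℕ => |1 - (t K' : ℝ) / K'|) atTop (nhds 0) := by
        have : Tendsto (fun K' : ℕ => 1 - (t K' : ℝ) / K') atTop (nhds 0) := by
          simpa using (tendsto_const_nhds (x := (1:ℝ))).sub ht
        simpa using this.abs
      have h2 : Tendsto (fun K' : ℕ => (K' : ℝ) / ((t K' : ℝ) + 1)) atTop (nhds 1) := by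
        have h3 : Tendsto (fun K' : ℕ => (((t K' : ℝ) + 1) / K')⁻¹) atTop (nhds 1) := by
          have : Tendsto (fun K' : ℕ => ((t K' : ℝ) + 1) / K') atTop (nhds 1) := by
            have := htp1
            apply this.congr'
            filter_upwards [hne] with K' hK'
            field_simp
          simpa using this.inv₀ (by norm_num)
        apply h3.congr'
        filter_upwards [hne] with K' hK'
        rw [inv_div]
      simpa using h1.mul h2
    apply squeeze_zero' _ _ hub
    · apply Eventually.of_forall
      intro K'
      apply div_nonneg _ (by positivity)
      have := Nat.choose_le_choose (t K' + 1) (Nat.sub_le K' m)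
      have : ((K' - m).choose (t K' + 1) : ℝ) ≤ (K'.choose (t K' + 1) : ℝ) := by
        exact_mod_cast this
      linarith
    · filter_upwards [hne] with K' hKne
      have hKpos : (0 : ℝ) < (K' : ℝ) := lt_of_le_of_ne (Nat.cast_nonneg _) (Ne.symm hKne)
      set k := t K' with hk
      have hub' : ((K'.choose (k + 1) : ℝ) - ((K' - m).choose (k + 1) : ℝ)) / (K'.choose k : ℝ)
          ≤ ((K' - k : ℕ) : ℝ) / ((k : ℝ) + 1) := by
        rcases le_or_gt (k + 1) K' with hcase | hcase
        · have hC0 : (0 : ℝ) < (K'.choose k : ℝ) := by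
            exact_mod_cast Nat.choose_pos (by omega)
          have heq : (K'.choose (k + 1) : ℝ) / (K'.choose k : ℝ)
              = ((K' - k : ℕ) : ℝ) / ((k : ℝ) + 1) := by
            have := congrArg (fun x : ℕ => (x : ℝ)) (Nat.choose_succ_right_eq K' k)
            push_cast at this
            rw [div_eq_div_iff hC0.ne' (by positivity)]
            linarith [this]
          rw [← heq]
          apply (div_le_div_iff_of_pos_right hC0).mpr
          have : (0 : ℝ) ≤ ((K' - m).choose (k + 1) : ℝ) := Nat.cast_nonneg _
          linarith
        · have h1 : K'.choose (k + 1) = 0 := Nat.choose_eq_zero_of_lt (by omega)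
          have h2 : (K' - m).choose (k + 1) = 0 := Nat.choose_eq_zero_of_lt (by omega)
          rw [h1, h2]
          simp
          positivity
      refine hub'.trans ?_
      have habs : ((K' - k : ℕ) : ℝ) ≤ |(K' : ℝ) - k| := aux_cast_sub_le_abs K' k
      have habs2 : |(K' : ℝ) - (k : ℝ)| = |1 - (k : ℝ) / K'| * (K' : ℝ) := by
        rw [← abs_of_pos hKpos, ← abs_mul]
        congr 1
        field_simp
        rw [abs_of_pos hKpos]; ring
      calc ((K' - k : ℕ) : ℝ) / ((k : ℝ) + 1) ≤ |(K' : ℝ) - k| / ((k : ℝ) + 1) := by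
            exact (div_le_div_iff_of_pos_right (by positivity)).mpr habs
        _ = |1 - (k : ℝ) / K'| * ((K' : ℝ) / ((k : ℝ) + 1)) := by
            rw [habs2]; ring
  · -- p < 1 case
    -- eventually t K' + 1 + m ≤ K'
    have hev : ∀ᶠ K' : ℕ in atTop, t K' + 1 + m ≤ K' := by
      have h1 : ∀ᶠ K' : ℕ in atTop, (t K' : ℝ) / K' < (1 + p) / 2 :=
        ht.eventually_lt_const (by linarith)
      have h2 : Tendsto (fun K' : ℕ => ((m : ℝ) + 1) / K') atTop (nhds 0) := by
        simpa [div_eq_mul_inv] using (tendsto_const_nhds (x := (m : ℝ) + 1)).mul hinv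
      have h3 : ∀ᶠ K' : ℕ in atTop, ((m : ℝ) + 1) / K' < (1 - p) / 2 :=
        h2.eventually_lt_const (by linarith)
      filter_upwards [h1, h3, eventually_ge_atTop 1] with K' h1 h3 h4
      have hKpos : (0 : ℝ) < (K' : ℝ) := by exact_mod_cast h4
      have : (t K' : ℝ) + ((m : ℝ) + 1) < K' := by
        have e1 : (t K' : ℝ) < (1 + p) / 2 * K' := by
          rw [div_lt_iff₀ hKpos] at h1; linarith
        have e2 : ((m : ℝ) + 1) < (1 - p) / 2 * K' := by
          rw [div_lt_iff₀ hKpos] at h3; linarith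
        nlinarith
      have hlt : t K' + m + 1 < K' + 1 := by
        have hc : ((t K' + m + 1 : ℕ) : ℝ) < ((K' + 1 : ℕ) : ℝ) := by push_cast; linarith
        exact_mod_cast hc
      omega
    -- limit of the algebraic form
    have hF : Tendsto (fun K' : ℕ =>
        (((K' : ℝ) - t K') / ((t K' : ℝ) + 1)) *
          (1 - ∏ i ∈ range m, (((K' : ℝ) - t K' - 1 - i) / ((K' : ℝ) - i))))
        atTop (nhds (((1 - p) / p) * (1 - (1 - p) ^ m))) := by
      have hfac1 : Tendsto (fun K' : ℕ => ((K' : ℝ) - t K') / ((t K' : ℝ) + 1))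
          atTop (nhds ((1 - p) / p)) := by
        have h1 : Tendsto (fun K' : ℕ => (1 - (t K' : ℝ) / K') / ((t K' : ℝ) / K' + ((K':ℝ))⁻¹))
            atTop (nhds ((1 - p) / p)) := by
          exact Tendsto.div (by simpa using (tendsto_const_nhds (x := (1:ℝ))).sub ht) htp1
            (ne_of_gt hp0)
        apply h1.congr'
        filter_upwards [hne] with K' hK'
        field_simp
      have hfac2 : Tendsto (fun K' : ℕ => ∏ i ∈ range m, (((K' : ℝ) - t K' - 1 - i) / ((K' : ℝ) - i)))
          atTop (nhds ((1 - p) ^ m)) := by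
        have : Tendsto (fun K' : ℕ => ∏ i ∈ range m, (((K' : ℝ) - t K' - 1 - i) / ((K' : ℝ) - i)))
            atTop (nhds (∏ _i ∈ range m, (1 - p))) := by
          apply tendsto_finset_prod
          intro i _
          have h1 : Tendsto (fun K' : ℕ =>
              (1 - (t K' : ℝ) / K' - (1 + (i : ℝ)) * ((K':ℝ))⁻¹) / (1 - (i : ℝ) * ((K':ℝ))⁻¹))
              atTop (nhds (1 - p)) := by
            have hnum : Tendsto (fun K' : ℕ => 1 - (t K' : ℝ) / K' - (1 + (i : ℝ)) * ((K':ℝ))⁻¹)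
                atTop (nhds (1 - p)) := by
              have := ((tendsto_const_nhds (x := (1:ℝ))).sub ht).sub
                ((tendsto_const_nhds (x := 1 + (i : ℝ))).mul hinv)
              simpa using this
            have hden : Tendsto (fun K' : ℕ => 1 - (i : ℝ) * ((K':ℝ))⁻¹) atTop (nhds 1) := by
              have := (tendsto_const_nhds (x := (1:ℝ))).sub
                ((tendsto_const_nhds (x := (i : ℝ))).mul hinv)
              simpa using this
            have := hnum.div hden (by norm_num)
            rw [div_one] at this
            exact this
          apply h1.congr'
          filter_upwards [hne] with K' hK'
          field_simp
          ring
        simpa using this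
      have := hfac1.mul ((tendsto_const_nhds (x := (1:ℝ))).sub hfac2)
      simpa using this
    apply hF.congr'
    filter_upwards [hev] with K' hK'
    exact (aux_pointwise K' (t K') m hK').symm
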